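/- For any point z in the polytope 𝒫, the sublevel half-space ℋ⁻(z) = { x ∈ 𝒫 : βᵀx ≤ βᵀz } is 𝒫-invariant, and likewise the strict sublevel set { x ∈ 𝒫 : βᵀx < βᵀz } intersected with 𝒫 is 𝒫-invariant. -/

import Mathlib

open Matrix Set

/-- A trajectory of the control system `ẋ = f(x,u)` on the time interval `[0,T]`. -/
def IsTrajOn {n m : ℕ} (f : (Fin n → ℝ) → (Fin m → ℝ) → (Fin n → ℝ))
    (u : ℝ → Fin m → ℝ) (x : ℝ → Fin n → ℝ) (T : ℝ) : Prop :=
  ∀ t ∈ Set.Icc (0:ℝ) T, HasDerivAt x (f (x t) (u t)) t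

/-- `A` is `Ω`-invariant. -/
def OmegaInvariant {n m : ℕ} (f : (Fin n → ℝ) → (Fin m → ℝ) → (Fin n → ℝ))
    (Ω A : Set (Fin n → ℝ)) : Prop :=
  ∀ (u : ℝ → Fin m → ℝ) (x : ℝ → Fin n → ℝ) (T : ℝ), 0 ≤ T →
    IsTrajOn f u x T → x 0 ∈ A → (∀ t ∈ Set.Icc (0:ℝ) T, x t ∈ Ω) →
    ∀ t ∈ Set.Icc (0:ℝ) T, x t ∈ A

/-- Componentwise derivative fact: `t ↦ β ⬝ᵥ x t` has derivative `β ⬝ᵥ v`. -/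
lemma hasDerivAt_dot {n : ℕ} (β : Fin n → ℝ) {x : ℝ → Fin n → ℝ} {v : Fin n → ℝ} {t : ℝ}
    (h : HasDerivAt x v t) : HasDerivAt (fun s => β ⬝ᵥ x s) (β ⬝ᵥ v) t := by
  simp only [dotProduct]
  exact HasDerivAt.fun_sum fun i _ => ((hasDerivAt_pi.mp h) i).const_mul (β i)

/-- Along a trajectory staying in `P`, `β ⬝ᵥ x t` is nonincreasing. -/
lemma dot_antitone {n m : ℕ}
    (A : Matrix (Fin n) (Fin n) ℝ) (a : Fin n → ℝ) (B : Matrix (Fin n) (Fin m) ℝ)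
    (P : Set (Fin n → ℝ)) (β : Fin n → ℝ)
    (hβB : ∀ w : Fin m → ℝ, β ⬝ᵥ B.mulVec w = 0)
    (hβsign : ∀ x ∈ P, β ⬝ᵥ (A.mulVec x + a) ≤ 0)
    (u : ℝ → Fin m → ℝ) (x : ℝ → Fin n → ℝ) (T : ℝ)
    (htraj : IsTrajOn (fun x u => A.mulVec x + a + B.mulVec u) u x T)
    (hstay : ∀ t ∈ Set.Icc (0:ℝ) T, x t ∈ P) :
    AntitoneOn (fun t => β ⬝ᵥ x t) (Set.Icc (0:ℝ) T) := by
  have hg : ∀ t ∈ Set.Icc (0:ℝ) T, HasDerivAt (fun s => β ⬝ᵥ x s)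
      (β ⬝ᵥ (A.mulVec (x t) + a + B.mulVec (u t))) t :=
    fun t ht => hasDerivAt_dot β (htraj t ht)
  apply antitoneOn_of_deriv_nonpos (convex_Icc 0 T)
  · exact fun t ht => (hg t ht).continuousAt.continuousWithinAt
  · intro t ht
    rw [interior_Icc] at ht
    exact ((hg t (Ioo_subset_Icc_self ht)).differentiableAt).differentiableWithinAt
  · intro t ht
    rw [interior_Icc] at ht
    have ht' := Ioo_subset_Icc_self ht
    rw [(hg t ht').deriv]
    have := hβsign (x t) (hstay t ht')
    calc β ⬝ᵥ (A.mulVec (x t) + a + B.mulVec (u t))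
        = β ⬝ᵥ (A.mulVec (x t) + a) + β ⬝ᵥ B.mulVec (u t) := by
          rw [dotProduct_add]
      _ ≤ 0 := by rw [hβB]; simpa using this

/-- For `z ∈ 𝒫`, the sublevel half-space `ℋ⁻(z) = {x ∈ 𝒫 : βᵀx ≤ βᵀz}` is `𝒫`-invariant,
and so is the strict sublevel set `{x ∈ 𝒫 : βᵀx < βᵀz}`. -/
theorem sublevel_invariant {n m : ℕ}
    (A : Matrix (Fin n) (Fin n) ℝ) (a : Fin n → ℝ) (B : Matrix (Fin n) (Fin m) ℝ)
    (hBrank : B.rank = n - 1)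
    (V : Finset (Fin n → ℝ)) (P : Set (Fin n → ℝ))
    (hP : P = convexHull ℝ (V : Set (Fin n → ℝ)))
    (hPfull : (interior P).Nonempty)
    (O : Set (Fin n → ℝ)) (hO : O = {x | A.mulVec x + a ∈ Set.range B.mulVec})
    (hdisj : interior P ∩ O = ∅)
    (β : Fin n → ℝ) (hβ1 : β ⬝ᵥ β = 1)
    (hβB : ∀ w : Fin m → ℝ, β ⬝ᵥ B.mulVec w = 0)
    (hβsign : ∀ x ∈ P, β ⬝ᵥ (A.mulVec x + a) ≤ 0)
    (z : Fin n → ℝ) (hz : z ∈ P) :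
    OmegaInvariant (fun x u => A.mulVec x + a + B.mulVec u) P
        {x ∈ P | β ⬝ᵥ x ≤ β ⬝ᵥ z} ∧
      OmegaInvariant (fun x u => A.mulVec x + a + B.mulVec u) P
        {x ∈ P | β ⬝ᵥ x < β ⬝ᵥ z} := by
  constructor
  · intro u x T hT htraj hx0 hstay t ht
    have hanti := dot_antitone A a B P β hβB hβsign u x T htraj hstay
    have h0 : (0:ℝ) ∈ Set.Icc (0:ℝ) T := ⟨le_refl 0, hT⟩
    have := hanti h0 ht ht.1
    exact ⟨hstay t ht, le_trans this hx0.2⟩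
  · intro u x T hT htraj hx0 hstay t ht
    have hanti := dot_antitone A a B P β hβB hβsign u x T htraj hstay
    have h0 : (0:ℝ) ∈ Set.Icc (0:ℝ) T := ⟨le_refl 0, hT⟩
    have := hanti h0 ht ht.1
    exact ⟨hstay t ht, lt_of_le_of_lt this hx0.2⟩
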